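/- Suppose 0 < β ≤ β_c = log 4 and 0 < K < K_c^{(2)}(β) = (e^β + 2)/(4β). Then for every α ∈ (0, (K_c^{(2)}(β) − K)/K_c^{(2)}(β)) and every ε ∈ (0,1), for all sufficiently large n the mixing time of the Glauber dynamics of the mean-field Blume–Capel model on n vertices satisfies t_mix(ε) ≤ (n/α)(log n + log(1/ε)). -/

import Mathlib

open Filter

noncomputable section

/-- The three spin values `-1, 0, 1` of the Blume–Capel model. -/
def spinVal : Fin 3 → ℝ := ![(-1 : ℝ), 0, 1]

/-- Total spin `S_n(ω) = Σ_j ω_j`. -/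
def Sn (n : ℕ) (ω : Fin n → Fin 3) : ℝ := ∑ i, spinVal (ω i)

/-- Blume–Capel Hamiltonian `H_{n,K}(ω) = Σ_j ω_j² − (K/n)(Σ_j ω_j)²`. -/
def Hn (n : ℕ) (K : ℝ) (ω : Fin n → Fin 3) : ℝ :=
  (∑ i, (spinVal (ω i)) ^ 2) - (K / n) * (Sn n ω) ^ 2

/-- Partition function `Z_n(β,K)`. -/
def Zn (n : ℕ) (β K : ℝ) : ℝ := ∑ ω : Fin n → Fin 3, Real.exp (-β * Hn n K ω)

/-- The Gibbs measure `P_{n,β,K}(ω) = exp(−βH_{n,K}(ω))/Z_n(β,K)`. -/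
def gibbsBC (n : ℕ) (β K : ℝ) (ω : Fin n → Fin 3) : ℝ :=
  Real.exp (-β * Hn n K ω) / Zn n β K

/-- Glauber update weights for a vertex with complementary spin sum `S̃`:
the new spin is `−1, 0, +1` with weights `e^{−2βK S̃/n}, e^{β−βK/n}, e^{2βK S̃/n}`. -/
def bcWeight (β K : ℝ) (n : ℕ) (Stil : ℝ) : Fin 3 → ℝ :=
  ![Real.exp (-(2 * β * K * Stil / n)), Real.exp (β - β * K / n),
    Real.exp (2 * β * K * Stil / n)]

/-- Transition matrix of the Glauber dynamics of the mean-field Blume–Capel model: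
pick a vertex `i` uniformly and refresh its spin according to the conditional
Gibbs distribution. -/
def bcGlauber (β K : ℝ) (n : ℕ) :
    Matrix (Fin n → Fin 3) (Fin n → Fin 3) ℝ := fun σ τ =>
  (n : ℝ)⁻¹ * ∑ i : Fin n, ∑ k : Fin 3,
    if τ = Function.update σ i k then
      bcWeight β K n (Sn n σ - spinVal (σ i)) k /
        (∑ j : Fin 3, bcWeight β K n (Sn n σ - spinVal (σ i)) j)
    else 0

/-- Total variation distance `(1/2)Σ_x |μ(x) − ν(x)|` on `{−1,0,1}^n`. -/
def tvBC (n : ℕ) (μ ν : (Fin n → Fin 3) → ℝ) : ℝ := (1 / 2) * ∑ ω, |μ ω - ν ω|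

/-- Mixing time `t_mix(ε)` of the Glauber dynamics of the Blume–Capel model. -/
def tmixBC (β K : ℝ) (n : ℕ) (ε : ℝ) : ℕ :=
  sInf {t : ℕ | ∀ σ : Fin n → Fin 3,
    tvBC n (fun τ => ((bcGlauber β K n) ^ t) σ τ) (gibbsBC n β K) ≤ ε}

/-- Second-order critical curve `K_c^{(2)}(β) = (e^β + 2)/(4β)`. -/
def Kc2 (β : ℝ) : ℝ := (Real.exp β + 2) / (4 * β)

namespace BCaux
open Real

def DD (cc x : ℝ) : ℝ := Real.exp (-x) + cc + Real.exp x
def pplus (cc x : ℝ) : ℝ := Real.exp x / DD cc x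
def pminus (cc x : ℝ) : ℝ := Real.exp (-x) / DD cc x
def mm (cc x : ℝ) : ℝ := pplus cc x - pminus cc x

lemma DD_pos {cc : ℝ} (hc : 0 < cc) (x : ℝ) : 0 < DD cc x := by
  unfold DD; positivity

lemma hasDerivAt_DD (cc x : ℝ) : HasDerivAt (DD cc) (Real.exp x - Real.exp (-x)) x := by
  have h1 : HasDerivAt (fun x : ℝ => Real.exp (-x)) (-Real.exp (-x)) x := by
    simpa [Function.comp_def] using (Real.hasDerivAt_exp (-x)).comp x (hasDerivAt_neg x)
  have h2 := Real.hasDerivAt_exp x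
  have : HasDerivAt (fun x : ℝ => Real.exp (-x) + cc + Real.exp x)
      (-Real.exp (-x) + 0 + Real.exp x) x := (h1.add (hasDerivAt_const x cc)).add h2
  exact this.congr_deriv (by ring)

lemma hasDerivAt_pplus {cc : ℝ} (hc : 0 < cc) (x : ℝ) :
    HasDerivAt (pplus cc) ((2 + cc * Real.exp x) / (DD cc x)^2) x := by
  have h := (Real.hasDerivAt_exp x).div (hasDerivAt_DD cc x) (DD_pos hc x).ne'
  refine h.congr_deriv ?_
  have hx : Real.exp x * Real.exp (-x) = 1 := by
    rw [← Real.exp_add]; simp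
  congr 1; unfold DD
  ring_nf
  nlinarith [hx]

lemma hasDerivAt_pminus {cc : ℝ} (hc : 0 < cc) (x : ℝ) :
    HasDerivAt (pminus cc) (-(2 + cc * Real.exp (-x)) / (DD cc x)^2) x := by
  have h1 : HasDerivAt (fun x : ℝ => Real.exp (-x)) (-Real.exp (-x)) x := by
    simpa [Function.comp_def] using (Real.hasDerivAt_exp (-x)).comp x (hasDerivAt_neg x)
  have h := h1.div (hasDerivAt_DD cc x) (DD_pos hc x).ne'
  refine h.congr_deriv ?_
  have hx : Real.exp x * Real.exp (-x) = 1 := by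
    rw [← Real.exp_add]; simp
  congr 1; unfold DD
  ring_nf
  nlinarith [hx]

lemma pplus_mono {cc : ℝ} (hc : 0 < cc) : Monotone (pplus cc) := by
  have hd : ∀ x, HasDerivAt (pplus cc) ((2 + cc * Real.exp x) / (DD cc x)^2) x :=
    hasDerivAt_pplus hc
  apply monotone_of_deriv_nonneg
  · exact fun x => (hd x).differentiableAt
  · intro x
    rw [(hd x).deriv]
    positivity

lemma pminus_anti {cc : ℝ} (hc : 0 < cc) : Antitone (pminus cc) := by
  have hd : ∀ x, HasDerivAt (pminus cc) (-(2 + cc * Real.exp (-x)) / (DD cc x)^2) x :=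
    hasDerivAt_pminus hc
  apply antitone_of_deriv_nonpos
  · exact fun x => (hd x).differentiableAt
  · intro x
    rw [(hd x).deriv]
    apply div_nonpos_of_nonpos_of_nonneg
    · nlinarith [Real.exp_pos (-x)]
    · positivity

lemma mm_deriv_le {cc : ℝ} (hc : 0 < cc) (hc4 : cc ≤ 4) (x : ℝ) :
    (2 + cc * Real.exp x) / (DD cc x)^2 + (2 + cc * Real.exp (-x)) / (DD cc x)^2
      ≤ 2 / (2 + cc) := by
  have hD := DD_pos hc x
  have ha := Real.exp_pos x
  have hb := Real.exp_pos (-x)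
  have hab : Real.exp x * Real.exp (-x) = 1 := by rw [← Real.exp_add]; simp
  rw [← add_div, div_le_div_iff₀ (by positivity) (by positivity)]
  have hv : Real.exp x + Real.exp (-x) ≥ 2 := by nlinarith [sq_nonneg (Real.exp x - 1)]
  unfold DD
  nlinarith [mul_nonneg (sub_nonneg.2 hv) (by nlinarith : (0:ℝ) ≤ 2*(Real.exp x + Real.exp (-x)) + 2*cc - cc^2 + 4)]

lemma mm_lip {cc : ℝ} (hc : 0 < cc) (hc4 : cc ≤ 4) {x y : ℝ} (hxy : x ≤ y) :
    mm cc y - mm cc x ≤ 2 / (2 + cc) * (y - x) := by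
  set g : ℝ → ℝ := fun t => 2 / (2 + cc) * t - mm cc t with hg
  have hd : ∀ t, HasDerivAt g (2 / (2 + cc) -
      ((2 + cc * Real.exp t) / (DD cc t)^2 + (2 + cc * Real.exp (-t)) / (DD cc t)^2)) t := by
    intro t
    have h1 : HasDerivAt (fun t : ℝ => 2 / (2 + cc) * t) (2 / (2 + cc)) t := by
      simpa using (hasDerivAt_id t).const_mul (2 / (2 + cc))
    have h2 : HasDerivAt (mm cc) ((2 + cc * Real.exp t) / (DD cc t)^2 +
        (2 + cc * Real.exp (-t)) / (DD cc t)^2) t := by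
      have := (hasDerivAt_pplus hc t).sub (hasDerivAt_pminus hc t)
      exact this.congr_deriv (by ring)
    exact h1.sub h2
  have hmono : Monotone g := by
    apply monotone_of_deriv_nonneg
    · exact fun t => (hd t).differentiableAt
    · intro t
      rw [(hd t).deriv]
      have := mm_deriv_le hc hc4 t
      linarith
  have := hmono hxy
  simp only [hg] at this
  linarith

lemma key {cc : ℝ} (hc : 0 < cc) (hc4 : cc ≤ 4) (x y : ℝ) :
    |pplus cc y - pplus cc x| + |pminus cc y - pminus cc x| ≤ 2 / (2 + cc) * |y - x| := by
  rcases le_total x y with h | h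
  · rw [abs_of_nonneg (sub_nonneg.2 (pplus_mono hc h)),
      abs_of_nonpos (sub_nonpos.2 (pminus_anti hc h)), abs_of_nonneg (sub_nonneg.2 h)]
    have := mm_lip hc hc4 h
    unfold mm at this
    linarith
  · rw [abs_of_nonpos (sub_nonpos.2 (pplus_mono hc h)),
      abs_of_nonneg (sub_nonneg.2 (pminus_anti hc h)), abs_of_nonpos (sub_nonpos.2 h)]
    have := mm_lip hc hc4 h
    unfold mm at this
    linarith

end BCaux
open Finset

-- spin facts
lemma spinVal_abs_le (k : Fin 3) : |spinVal k| ≤ 1 := by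
  fin_cases k <;> simp [spinVal]

lemma spinVal_inj : Function.Injective spinVal := by
  intro a b h
  fin_cases a <;> fin_cases b <;> simp_all [spinVal] <;> norm_num at h

-- update sum lemmas
lemma sum_update_comp {n : ℕ} (f : Fin 3 → ℝ) (σ : Fin n → Fin 3) (i : Fin n) (k : Fin 3) :
    ∑ j, f (Function.update σ i k j) = ∑ j, f (σ j) - f (σ i) + f k := by
  have h : (fun j => f (Function.update σ i k j)) =
      Function.update (fun j => f (σ j)) i (f k) := by
    funext j
    by_cases hj : j = i
    · subst hj; simp
    · simp [Function.update_of_ne hj]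
  rw [h, Finset.sum_update_of_mem (Finset.mem_univ i)]
  rw [Finset.sum_sdiff_eq_sub (Finset.singleton_subset_iff.2 (Finset.mem_univ i))]
  simp; ring

lemma Sn_update {n : ℕ} (σ : Fin n → Fin 3) (i : Fin n) (k : Fin 3) :
    Sn n (Function.update σ i k) = Sn n σ - spinVal (σ i) + spinVal k :=
  sum_update_comp spinVal σ i k

lemma Stil_update {n : ℕ} (σ : Fin n → Fin 3) (i : Fin n) (k : Fin 3) :
    Sn n (Function.update σ i k) - spinVal (Function.update σ i k i)
      = Sn n σ - spinVal (σ i) := by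
  rw [Sn_update]; simp

-- weight formula
lemma bcWeight_eq (β K : ℝ) (n : ℕ) (S : ℝ) (k : Fin 3) :
    bcWeight β K n S k
      = Real.exp (2 * β * K * S / n * spinVal k + (β - β * K / n) * (1 - spinVal k ^ 2)) := by
  fin_cases k <;> simp [bcWeight, spinVal] <;> congr 1 <;> ring

lemma bcWeight_pos (β K : ℝ) (n : ℕ) (S : ℝ) (k : Fin 3) : 0 < bcWeight β K n S k := by
  rw [bcWeight_eq]; exact Real.exp_pos _

lemma bcWeight_sum_pos (β K : ℝ) (n : ℕ) (S : ℝ) :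
    0 < ∑ j : Fin 3, bcWeight β K n S j :=
  Finset.sum_pos (fun j _ => bcWeight_pos β K n S j) ⟨0, Finset.mem_univ 0⟩

-- detailed balance core
lemma detailed_core (β K : ℝ) (n : ℕ) (hn : (n:ℝ) ≠ 0) (σ : Fin n → Fin 3) (i : Fin n) (k : Fin 3) :
    Real.exp (-β * Hn n K σ) * bcWeight β K n (Sn n σ - spinVal (σ i)) k
      = Real.exp (-β * Hn n K (Function.update σ i k))
        * bcWeight β K n (Sn n σ - spinVal (σ i)) (σ i) := by
  rw [bcWeight_eq, bcWeight_eq, ← Real.exp_add, ← Real.exp_add]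
  congr 1
  unfold Hn
  rw [sum_update_comp (fun t => spinVal t ^ 2) σ i k, Sn_update]
  have h1 : (spinVal (σ i))^2 ≤ 1 := by nlinarith [spinVal_abs_le (σ i), abs_nonneg (spinVal (σ i)), sq_abs (spinVal (σ i))]
  field_simp
  ring

-- probabilities
def pr (β K : ℝ) (n : ℕ) (S : ℝ) (k : Fin 3) : ℝ :=
  bcWeight β K n S k / ∑ j : Fin 3, bcWeight β K n S j

lemma pr_nonneg (β K : ℝ) (n : ℕ) (S : ℝ) (k : Fin 3) : 0 ≤ pr β K n S k :=
  le_of_lt (div_pos (bcWeight_pos β K n S k) (bcWeight_sum_pos β K n S))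

lemma pr_sum (β K : ℝ) (n : ℕ) (S : ℝ) : ∑ k : Fin 3, pr β K n S k = 1 := by
  unfold pr
  rw [← Finset.sum_div, div_self (bcWeight_sum_pos β K n S).ne']

-- mulVec formula
lemma bcGlauber_mulVec (β K : ℝ) (n : ℕ) (g : (Fin n → Fin 3) → ℝ) (σ : Fin n → Fin 3) :
    (bcGlauber β K n).mulVec g σ
      = (n : ℝ)⁻¹ * ∑ i : Fin n, ∑ k : Fin 3,
          pr β K n (Sn n σ - spinVal (σ i)) k * g (Function.update σ i k) := by
  unfold Matrix.mulVec dotProduct bcGlauber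
  simp only [Finset.sum_mul, ite_mul, zero_mul, mul_assoc]
  rw [← Finset.mul_sum]
  congr 1
  rw [Finset.sum_comm]
  refine Finset.sum_congr rfl (fun i _ => ?_)
  rw [Finset.sum_comm]
  refine Finset.sum_congr rfl (fun k _ => ?_)
  rw [Finset.sum_ite_eq' Finset.univ (Function.update σ i k)]
  simp [pr]

-- row sums
lemma bcGlauber_rowsum (β K : ℝ) (n : ℕ) (hn : (n:ℝ) ≠ 0) (σ : Fin n → Fin 3) :
    ∑ τ, bcGlauber β K n σ τ = 1 := by
  have := bcGlauber_mulVec β K n (fun _ => 1) σ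
  unfold Matrix.mulVec dotProduct at this
  simp only [mul_one] at this
  rw [this]
  simp only [pr_sum]
  simp [Finset.sum_const, hn]

lemma bcGlauber_pow_rowsum (β K : ℝ) (n : ℕ) (hn : (n:ℝ) ≠ 0) (t : ℕ) (σ : Fin n → Fin 3) :
    ∑ τ, (bcGlauber β K n ^ t) σ τ = 1 := by
  induction t generalizing σ with
  | zero => simp [Matrix.one_apply, Finset.sum_ite_eq']
  | succ t ih =>
    rw [pow_succ]
    simp only [Matrix.mul_apply]
    rw [Finset.sum_comm]
    calc ∑ x, ∑ τ, (bcGlauber β K n ^ t) σ x * bcGlauber β K n x τ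
        = ∑ x, (bcGlauber β K n ^ t) σ x * ∑ τ, bcGlauber β K n x τ := by
          congr 1; funext x; rw [Finset.mul_sum]
      _ = 1 := by simp only [bcGlauber_rowsum β K n hn, mul_one]; exact ih σ

-- Gibbs facts
lemma Zn_pos (n : ℕ) (β K : ℝ) : 0 < Zn n β K :=
  Finset.sum_pos (fun ω _ => Real.exp_pos _) ⟨fun _ => 0, Finset.mem_univ _⟩

lemma gibbsBC_nonneg (n : ℕ) (β K : ℝ) (ω : Fin n → Fin 3) : 0 ≤ gibbsBC n β K ω :=
  le_of_lt (div_pos (Real.exp_pos _) (Zn_pos n β K))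

lemma gibbsBC_sum (n : ℕ) (β K : ℝ) : ∑ ω, gibbsBC n β K ω = 1 := by
  unfold gibbsBC
  rw [← Finset.sum_div]
  exact div_self (Zn_pos n β K).ne'

-- detailed balance
lemma detailed_balance (β K : ℝ) (n : ℕ) (hn : (n:ℝ) ≠ 0) (σ τ : Fin n → Fin 3) :
    gibbsBC n β K σ * bcGlauber β K n σ τ = gibbsBC n β K τ * bcGlauber β K n τ σ := by
  unfold bcGlauber
  rw [← mul_assoc, ← mul_assoc, mul_comm (gibbsBC n β K σ), mul_comm (gibbsBC n β K τ),
    mul_assoc, mul_assoc]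
  congr 1
  rw [Finset.mul_sum, Finset.mul_sum]
  refine Finset.sum_congr rfl (fun i _ => ?_)
  by_cases hA : ∀ j, j ≠ i → σ j = τ j
  · have hτ : τ = Function.update σ i (τ i) := by
      funext j
      by_cases hj : j = i
      · subst hj; simp
      · rw [Function.update_of_ne hj]; exact (hA j hj).symm
    have hσ : σ = Function.update τ i (σ i) := by
      funext j
      by_cases hj : j = i
      · subst hj; simp
      · rw [Function.update_of_ne hj]; exact hA j hj
    have hS : Sn n τ - spinVal (τ i) = Sn n σ - spinVal (σ i) := by
      conv_lhs => rw [hτ]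
      rw [Stil_update]
    have hsum1 : ∑ k : Fin 3, (if τ = Function.update σ i k then
        bcWeight β K n (Sn n σ - spinVal (σ i)) k /
          (∑ j : Fin 3, bcWeight β K n (Sn n σ - spinVal (σ i)) j) else 0)
        = bcWeight β K n (Sn n σ - spinVal (σ i)) (τ i) /
          (∑ j : Fin 3, bcWeight β K n (Sn n σ - spinVal (σ i)) j) := by
      rw [Finset.sum_eq_single (τ i)]
      · rw [if_pos hτ]
      · intro k _ hk
        rw [if_neg]
        intro hcon
        exact hk (by rw [hcon]; simp)
      · simp
    have hsum2 : ∑ k : Fin 3, (if σ = Function.update τ i k then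
        bcWeight β K n (Sn n τ - spinVal (τ i)) k /
          (∑ j : Fin 3, bcWeight β K n (Sn n τ - spinVal (τ i)) j) else 0)
        = bcWeight β K n (Sn n τ - spinVal (τ i)) (σ i) /
          (∑ j : Fin 3, bcWeight β K n (Sn n τ - spinVal (τ i)) j) := by
      rw [Finset.sum_eq_single (σ i)]
      · rw [if_pos hσ]
      · intro k _ hk
        rw [if_neg]
        intro hcon
        exact hk (by rw [hcon]; simp)
      · simp
    rw [hsum1, hsum2, hS]
    unfold gibbsBC
    have hW := (bcWeight_sum_pos β K n (Sn n σ - spinVal (σ i))).ne'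
    have hZ := (Zn_pos n β K).ne'
    have hcore := detailed_core β K n hn σ i (τ i)
    rw [← hτ] at hcore
    field_simp
    simp only [neg_mul] at hcore
    linarith [hcore]
  · push_neg at hA
    obtain ⟨j, hj, hne⟩ := hA
    have h1 : ∀ k, τ ≠ Function.update σ i k := by
      intro k hcon
      exact hne (by rw [hcon, Function.update_of_ne hj])
    have h2 : ∀ k, σ ≠ Function.update τ i k := by
      intro k hcon
      apply hne
      rw [hcon, Function.update_of_ne hj]
    have z1 : (∑ k : Fin 3, if τ = Function.update σ i k then
        bcWeight β K n (Sn n σ - spinVal (σ i)) k /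
          (∑ j : Fin 3, bcWeight β K n (Sn n σ - spinVal (σ i)) j) else 0) = 0 :=
      Finset.sum_eq_zero (fun k _ => if_neg (h1 k))
    have z2 : (∑ k : Fin 3, if σ = Function.update τ i k then
        bcWeight β K n (Sn n τ - spinVal (τ i)) k /
          (∑ j : Fin 3, bcWeight β K n (Sn n τ - spinVal (τ i)) j) else 0) = 0 :=
      Finset.sum_eq_zero (fun k _ => if_neg (h2 k))
    rw [z1, z2, mul_zero, mul_zero]

-- stationarity
lemma stationary_one (β K : ℝ) (n : ℕ) (hn : (n:ℝ) ≠ 0) (τ : Fin n → Fin 3) :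
    ∑ σ, gibbsBC n β K σ * bcGlauber β K n σ τ = gibbsBC n β K τ := by
  calc ∑ σ, gibbsBC n β K σ * bcGlauber β K n σ τ
      = ∑ σ, gibbsBC n β K τ * bcGlauber β K n τ σ :=
        Finset.sum_congr rfl (fun σ _ => detailed_balance β K n hn σ τ)
    _ = gibbsBC n β K τ * ∑ σ, bcGlauber β K n τ σ := by rw [Finset.mul_sum]
    _ = gibbsBC n β K τ := by rw [bcGlauber_rowsum β K n hn, mul_one]

lemma stationary_pow (β K : ℝ) (n : ℕ) (hn : (n:ℝ) ≠ 0) (t : ℕ) (τ : Fin n → Fin 3) :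
    ∑ σ, gibbsBC n β K σ * (bcGlauber β K n ^ t) σ τ = gibbsBC n β K τ := by
  induction t generalizing τ with
  | zero => simp [Matrix.one_apply, Finset.sum_ite_eq, gibbsBC]
  | succ t ih =>
    rw [pow_succ]
    simp only [Matrix.mul_apply]
    calc ∑ σ, gibbsBC n β K σ * ∑ x, (bcGlauber β K n ^ t) σ x * bcGlauber β K n x τ
        = ∑ σ, ∑ x, gibbsBC n β K σ * (bcGlauber β K n ^ t) σ x * bcGlauber β K n x τ := by
          refine Finset.sum_congr rfl (fun σ _ => ?_)
          rw [Finset.mul_sum]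
          exact Finset.sum_congr rfl (fun x _ => (mul_assoc _ _ _).symm)
      _ = ∑ x, (∑ σ, gibbsBC n β K σ * (bcGlauber β K n ^ t) σ x) * bcGlauber β K n x τ := by
          rw [Finset.sum_comm]
          refine Finset.sum_congr rfl (fun x _ => ?_)
          rw [Finset.sum_mul]
      _ = ∑ x, gibbsBC n β K x * bcGlauber β K n x τ := by
          refine Finset.sum_congr rfl (fun x _ => ?_)
          rw [ih]
      _ = gibbsBC n β K τ := stationary_one β K n hn τ

-- link pr to pplus/pminus
lemma pr_zero_eq (β K : ℝ) (n : ℕ) (S : ℝ) :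
    pr β K n S 0 = BCaux.pminus (Real.exp (β - β * K / n)) (2 * β * K * S / n) := by
  simp [pr, bcWeight, BCaux.pminus, BCaux.DD, Fin.sum_univ_three]

lemma pr_two_eq (β K : ℝ) (n : ℕ) (S : ℝ) :
    pr β K n S 2 = BCaux.pplus (Real.exp (β - β * K / n)) (2 * β * K * S / n) := by
  simp [pr, bcWeight, BCaux.pplus, BCaux.DD, Fin.sum_univ_three]

lemma pr_diff_bound (β K : ℝ) (n : ℕ) (hβ0 : 0 < β) (hK0 : 0 < K)
    (hc4 : Real.exp (β - β * K / n) ≤ 4) (S S' : ℝ) :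
    |pr β K n S' 0 - pr β K n S 0| + |pr β K n S' 2 - pr β K n S 2|
      ≤ 2 / (2 + Real.exp (β - β * K / n)) * (2 * β * K / n * |S' - S|) := by
  set cc := Real.exp (β - β * K / n) with hcc
  have hc : 0 < cc := Real.exp_pos _
  rw [pr_zero_eq, pr_zero_eq, pr_two_eq, pr_two_eq]
  have h := BCaux.key hc hc4 (2 * β * K * S / n) (2 * β * K * S' / n)
  have he : |2 * β * K * S' / n - 2 * β * K * S / n| = 2 * β * K / n * |S' - S| := by
    rw [show 2 * β * K * S' / n - 2 * β * K * S / n = 2 * β * K / n * (S' - S) by ring,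
      abs_mul]
    congr 1
    rw [abs_of_nonneg]
    positivity
  rw [he] at h
  linarith [h, abs_add_le (BCaux.pplus cc (2 * β * K * S' / n) - BCaux.pplus cc (2 * β * K * S / n)) 0]

-- Lipschitz notion (single-site)
def Lip1 (n : ℕ) (L : ℝ) (g : (Fin n → Fin 3) → ℝ) : Prop :=
  ∀ σ (i : Fin n) (k : Fin 3),
    |g (Function.update σ i k) - g σ| ≤ L * |spinVal k - spinVal (σ i)|

lemma contraction (β K : ℝ) (n : ℕ) (hn : 1 ≤ n) (hβ0 : 0 < β) (hK0 : 0 < K)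
    (hc4 : Real.exp (β - β * K / n) ≤ 4) (g : (Fin n → Fin 3) → ℝ) (L : ℝ) (hL : 0 ≤ L)
    (hg : Lip1 n L g) :
    Lip1 n ((1 - 1/(n:ℝ)) * (1 + 4*β*K/((2 + Real.exp (β - β*K/n)) * n)) * L)
      ((bcGlauber β K n).mulVec g) := by
  intro σ i₀ k'
  set cc := Real.exp (β - β * K / n) with hcc
  have hc : 0 < cc := Real.exp_pos _
  have hnR : (0:ℝ) < n := by exact_mod_cast hn
  set τ := Function.update σ i₀ k' with hτ
  set u := |spinVal k' - spinVal (σ i₀)| with hu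
  have hu0 : 0 ≤ u := abs_nonneg _
  set r := 4*β*K/((2 + cc) * n) with hr
  have hr0 : 0 ≤ r := by positivity
  -- per-site terms
  set T : Fin n → ℝ := fun i =>
    (∑ k : Fin 3, pr β K n (Sn n τ - spinVal (τ i)) k * g (Function.update τ i k))
    - (∑ k : Fin 3, pr β K n (Sn n σ - spinVal (σ i)) k * g (Function.update σ i k)) with hT
  have hdiff : (bcGlauber β K n).mulVec g τ - (bcGlauber β K n).mulVec g σ
      = (n:ℝ)⁻¹ * ∑ i, T i := by
    rw [bcGlauber_mulVec, bcGlauber_mulVec, ← mul_sub, ← Finset.sum_sub_distrib]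
  -- T i₀ = 0
  have hTi0 : T i₀ = 0 := by
    have h1 : Sn n τ - spinVal (τ i₀) = Sn n σ - spinVal (σ i₀) := Stil_update σ i₀ k'
    have h2 : ∀ k, Function.update τ i₀ k = Function.update σ i₀ k := by
      intro k; rw [hτ, Function.update_idem]
    simp only [hT, h1]
    rw [Finset.sum_congr rfl (fun k _ => by rw [h2 k])]
    ring
  -- bound for i ≠ i₀
  have hTbound : ∀ i, i ≠ i₀ → |T i| ≤ L * u * (1 + r) := by
    intro i hi
    have hτi : τ i = σ i := Function.update_of_ne hi k' σ
    have hS : Sn n τ - spinVal (τ i)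
        = (Sn n σ - spinVal (σ i)) + (spinVal k' - spinVal (σ i₀)) := by
      rw [hτ, Sn_update, Function.update_of_ne hi k' σ]; ring
    have hSdiff : |(Sn n τ - spinVal (τ i)) - (Sn n σ - spinVal (σ i))| = u := by
      rw [hS, hu]; ring_nf
    -- coupling of updated configs
    have hupd : ∀ k, Function.update τ i k
        = Function.update (Function.update σ i k) i₀ k' := by
      intro k; rw [hτ, Function.update_comm hi]
    have hgdiff : ∀ k : Fin 3,
        |g (Function.update τ i k) - g (Function.update σ i k)| ≤ L * u := by
      intro k
      rw [hupd k]
      have := hg (Function.update σ i k) i₀ k'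
      rw [Function.update_of_ne (Ne.symm hi) k σ] at this
      exact this
    -- decomposition
    have hdecomp : T i
        = (∑ k : Fin 3, pr β K n (Sn n τ - spinVal (τ i)) k *
            (g (Function.update τ i k) - g (Function.update σ i k)))
          + ∑ k : Fin 3, (pr β K n (Sn n τ - spinVal (τ i)) k
              - pr β K n (Sn n σ - spinVal (σ i)) k) * g (Function.update σ i k) := by
      simp only [hT]
      rw [← Finset.sum_add_distrib, ← Finset.sum_sub_distrib]
      exact Finset.sum_congr rfl (fun k _ => by ring)
    have hA : |∑ k : Fin 3, pr β K n (Sn n τ - spinVal (τ i)) k *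
          (g (Function.update τ i k) - g (Function.update σ i k))| ≤ L * u := by
      calc |∑ k : Fin 3, pr β K n (Sn n τ - spinVal (τ i)) k *
            (g (Function.update τ i k) - g (Function.update σ i k))|
          ≤ ∑ k : Fin 3, |pr β K n (Sn n τ - spinVal (τ i)) k *
            (g (Function.update τ i k) - g (Function.update σ i k))| :=
            Finset.abs_sum_le_sum_abs _ _
        _ ≤ ∑ k : Fin 3, pr β K n (Sn n τ - spinVal (τ i)) k * (L * u) := by
            refine Finset.sum_le_sum (fun k _ => ?_)
            rw [abs_mul, abs_of_nonneg (pr_nonneg β K n _ k)]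
            exact mul_le_mul_of_nonneg_left (hgdiff k) (pr_nonneg β K n _ k)
        _ = L * u := by rw [← Finset.sum_mul, pr_sum, one_mul]
    -- second sum
    have hgL : ∀ k : Fin 3, |g (Function.update σ i k) - g (Function.update σ i 1)|
        ≤ L * |spinVal k| := by
      intro k
      have := hg (Function.update σ i 1) i k
      rw [Function.update_idem, Function.update_self] at this
      simpa [spinVal] using this
    have hzero : (pr β K n (Sn n τ - spinVal (τ i)) 0 - pr β K n (Sn n σ - spinVal (σ i)) 0)
        + (pr β K n (Sn n τ - spinVal (τ i)) 1 - pr β K n (Sn n σ - spinVal (σ i)) 1)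
        + (pr β K n (Sn n τ - spinVal (τ i)) 2 - pr β K n (Sn n σ - spinVal (σ i)) 2) = 0 := by
      have h1 := pr_sum β K n (Sn n τ - spinVal (τ i))
      have h2 := pr_sum β K n (Sn n σ - spinVal (σ i))
      rw [Fin.sum_univ_three] at h1 h2
      linarith
    have hprd := pr_diff_bound β K n hβ0 hK0 (by rw [← hcc]; exact hc4)
      (Sn n σ - spinVal (σ i)) (Sn n τ - spinVal (τ i))
    rw [hSdiff] at hprd
    have hB : |∑ k : Fin 3, (pr β K n (Sn n τ - spinVal (τ i)) k
          - pr β K n (Sn n σ - spinVal (σ i)) k) * g (Function.update σ i k)|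
        ≤ L * (2 / (2 + cc) * (2 * β * K / n * u)) := by
      rw [Fin.sum_univ_three]
      have e1 := hgL 0
      have e2 := hgL 2
      simp only [spinVal] at e1 e2
      norm_num [Matrix.cons_val_two] at e1 e2
      set d0 := pr β K n (Sn n τ - spinVal (τ i)) 0 - pr β K n (Sn n σ - spinVal (σ i)) 0
        with hd0
      set d1 := pr β K n (Sn n τ - spinVal (τ i)) 1 - pr β K n (Sn n σ - spinVal (σ i)) 1
        with hd1
      set d2 := pr β K n (Sn n τ - spinVal (τ i)) 2 - pr β K n (Sn n σ - spinVal (σ i)) 2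
        with hd2
      set g0 := g (Function.update σ i 0) with hg0
      set g1 := g (Function.update σ i 1) with hg1
      set g2 := g (Function.update σ i 2) with hg2
      have hrw : d0 * g0 + d1 * g1 + d2 * g2 = d0 * (g0 - g1) + d2 * (g2 - g1) := by
        linear_combination g1 * hzero
      rw [hrw]
      calc |d0 * (g0 - g1) + d2 * (g2 - g1)|
          ≤ |d0 * (g0 - g1)| + |d2 * (g2 - g1)| := abs_add_le _ _
        _ = |d0| * |g0 - g1| + |d2| * |g2 - g1| := by rw [abs_mul, abs_mul]
        _ ≤ |d0| * L + |d2| * L := add_le_add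
            (mul_le_mul_of_nonneg_left e1 (abs_nonneg _))
            (mul_le_mul_of_nonneg_left e2 (abs_nonneg _))
        _ = (|d0| + |d2|) * L := by ring
        _ ≤ (2 / (2 + cc) * (2 * β * K / n * u)) * L :=
            mul_le_mul_of_nonneg_right hprd hL
        _ = L * (2 / (2 + cc) * (2 * β * K / n * u)) := by ring
    have hru : 2 / (2 + cc) * (2 * β * K / n * u) = r * u := by
      rw [hr]; field_simp; ring
    calc |T i| ≤ L * u + L * (2 / (2 + cc) * (2 * β * K / n * u)) := by
          rw [hdecomp]
          exact (abs_add_le _ _).trans (add_le_add hA hB)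
      _ = L * u * (1 + r) := by rw [hru]; ring
  -- assemble
  have habs : |(bcGlauber β K n).mulVec g (Function.update σ i₀ k')
      - (bcGlauber β K n).mulVec g σ| ≤ (n:ℝ)⁻¹ * ((n - 1 : ℝ) * (L * u * (1 + r))) := by
    rw [← hτ, hdiff, abs_mul, abs_of_nonneg (by positivity : (0:ℝ) ≤ (n:ℝ)⁻¹)]
    refine mul_le_mul_of_nonneg_left ?_ (by positivity)
    calc |∑ i, T i| ≤ ∑ i, |T i| := Finset.abs_sum_le_sum_abs _ _
      _ = ∑ i ∈ Finset.univ.erase i₀, |T i| + |T i₀| :=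
          (Finset.sum_erase_add _ _ (Finset.mem_univ i₀)).symm
      _ ≤ (Finset.univ.erase i₀).card • (L * u * (1 + r)) + 0 := by
          refine add_le_add (Finset.sum_le_card_nsmul _ _ _
            (fun i hi => hTbound i (Finset.ne_of_mem_erase hi))) ?_
          rw [hTi0]; simp
      _ = (n - 1 : ℝ) * (L * u * (1 + r)) := by
          rw [Finset.card_erase_of_mem (Finset.mem_univ i₀), Finset.card_univ,
            Fintype.card_fin, add_zero, nsmul_eq_mul, Nat.cast_sub hn, Nat.cast_one]
  have hn0 : (n:ℝ) ≠ 0 := hnR.ne'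
  have key : (n:ℝ)⁻¹ * (((n:ℝ) - 1) * (L * u * (1 + r)))
      = (1 - 1/(n:ℝ)) * (1 + r) * L * u := by
    field_simp
  exact habs.trans (le_of_eq key)


lemma contraction_pow (β K : ℝ) (n : ℕ) (hn : 1 ≤ n) (hβ0 : 0 < β) (hK0 : 0 < K)
    (hc4 : Real.exp (β - β * K / n) ≤ 4) (g : (Fin n → Fin 3) → ℝ) (hg : Lip1 n 1 g)
    (t : ℕ) :
    Lip1 n (((1 - 1/(n:ℝ)) * (1 + 4*β*K/((2 + Real.exp (β - β*K/n)) * n)))^t)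
      ((bcGlauber β K n ^ t).mulVec g) := by
  have hnR : (0:ℝ) < n := by exact_mod_cast hn
  have hκ0 : 0 ≤ (1 - 1/(n:ℝ)) * (1 + 4*β*K/((2 + Real.exp (β - β*K/n)) * n)) := by
    have h1 : (1:ℝ)/n ≤ 1 := by
      rw [div_le_one hnR]; exact_mod_cast hn
    have h2 : 0 ≤ 4*β*K/((2 + Real.exp (β - β*K/n)) * n) := by positivity
    nlinarith
  induction t with
  | zero => simpa [Matrix.one_mulVec] using hg
  | succ t ih =>
    rw [pow_succ', pow_succ']
    rw [← Matrix.mulVec_mulVec]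
    have := contraction β K n hn hβ0 hK0 hc4 _ _ (pow_nonneg hκ0 t) ih
    convert this using 2

lemma spin_gap (k l : Fin 3) (h : k ≠ l) : 1 ≤ |spinVal k - spinVal l| := by
  fin_cases k <;> fin_cases l <;> simp_all [spinVal] <;> norm_num

lemma lip1_global (n : ℕ) (L : ℝ) (hL : 0 ≤ L) (g : (Fin n → Fin 3) → ℝ)
    (hg : Lip1 n L g) (σ τ : Fin n → Fin 3) : |g σ - g τ| ≤ 2 * L * n := by
  suffices h : ∀ m : ℕ, ∀ σ τ : Fin n → Fin 3,
      (Finset.univ.filter (fun i => σ i ≠ τ i)).card ≤ m → |g σ - g τ| ≤ 2 * L * m by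
    refine (h n σ τ ?_).trans ?_
    · exact (Finset.card_filter_le _ _).trans (by simp)
    · exact le_refl _
  intro m
  induction m with
  | zero =>
    intro σ τ hc
    have : σ = τ := by
      funext j
      by_contra hj
      have : j ∈ Finset.univ.filter (fun i => σ i ≠ τ i) := by
        simp [hj]
      have := Finset.card_pos.2 ⟨j, this⟩
      omega
    rw [this]
    simp
  | succ m ih =>
    intro σ τ hc
    by_cases hd : ∃ i, σ i ≠ τ i
    · obtain ⟨i, hi⟩ := hd
      set τ' := Function.update τ i (σ i) with hτ'
      have hmem : i ∈ Finset.univ.filter (fun j => σ j ≠ τ j) := by simp [hi]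
      have hsub : Finset.univ.filter (fun j => σ j ≠ τ' j)
          ⊆ (Finset.univ.filter (fun j => σ j ≠ τ j)).erase i := by
        intro j hj
        simp only [Finset.mem_filter, Finset.mem_univ, true_and] at hj
        rw [Finset.mem_erase]
        by_cases hji : j = i
        · subst hji
          exfalso
          apply hj
          rw [hτ', Function.update_self]
        · refine ⟨hji, ?_⟩
          simp only [Finset.mem_filter, Finset.mem_univ, true_and]
          rw [hτ', Function.update_of_ne hji] at hj
          exact hj
      have hcard : (Finset.univ.filter (fun j => σ j ≠ τ' j)).card ≤ m := by
        have := Finset.card_le_card hsub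
        rw [Finset.card_erase_of_mem hmem] at this
        omega
      have h1 := ih σ τ' hcard
      have h2 : |g τ' - g τ| ≤ 2 * L := by
        have := hg τ i (σ i)
        have hb : |spinVal (σ i) - spinVal (τ i)| ≤ 2 := by
          have := spinVal_abs_le (σ i)
          have := spinVal_abs_le (τ i)
          rw [abs_sub_le_iff] at *
          constructor <;> [skip; skip] <;> linarith [abs_le.1 (spinVal_abs_le (σ i)),
            abs_le.1 (spinVal_abs_le (τ i))]
        calc |g τ' - g τ| = |g (Function.update τ i (σ i)) - g τ| := by rw [hτ']
          _ ≤ L * |spinVal (σ i) - spinVal (τ i)| := hg τ i (σ i)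
          _ ≤ 2 * L := by nlinarith
      calc |g σ - g τ| ≤ |g σ - g τ'| + |g τ' - g τ| := abs_sub_le _ _ _
        _ ≤ 2 * L * m + 2 * L := add_le_add h1 h2
        _ ≤ 2 * L * (m + 1 : ℕ) := by push_cast; nlinarith
    · push_neg at hd
      have : σ = τ := funext hd
      rw [this]
      simp
      positivity



lemma tv_bound (β K : ℝ) (n : ℕ) (hn : 1 ≤ n) (hβ0 : 0 < β) (hK0 : 0 < K)
    (hc4 : Real.exp (β - β * K / n) ≤ 4) (t : ℕ) (σ : Fin n → Fin 3) :
    tvBC n (fun τ => ((bcGlauber β K n) ^ t) σ τ) (gibbsBC n β K)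
      ≤ 2 * ((1 - 1/(n:ℝ)) * (1 + 4*β*K/((2 + Real.exp (β - β*K/n)) * n)))^t * n := by
  have hnR : (0:ℝ) < n := by exact_mod_cast hn
  have hn0 : (n:ℝ) ≠ 0 := hnR.ne'
  set κ := (1 - 1/(n:ℝ)) * (1 + 4*β*K/((2 + Real.exp (β - β*K/n)) * n)) with hκ
  set μ : (Fin n → Fin 3) → ℝ := fun τ' => ((bcGlauber β K n) ^ t) σ τ' with hμ
  set π : (Fin n → Fin 3) → ℝ := gibbsBC n β K with hπ
  classical
  let f : (Fin n → Fin 3) → ℝ := fun τ' => if 0 < μ τ' - π τ' then 1 else 0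
  have hfval : ∀ τ', f τ' = if 0 < μ τ' - π τ' then 1 else 0 := fun τ' => rfl
  -- f is 1-Lipschitz
  have hfLip : Lip1 n 1 f := by
    intro ρ i k
    by_cases hk : k = ρ i
    · subst hk
      rw [Function.update_eq_self]
      simp
    · have h1 : |f (Function.update ρ i k) - f ρ| ≤ 1 := by
        rw [hfval, hfval]
        split_ifs <;> norm_num
      calc |f (Function.update ρ i k) - f ρ| ≤ 1 := h1
        _ ≤ |spinVal k - spinVal (ρ i)| := spin_gap k (ρ i) (fun h => hk h)
        _ = 1 * |spinVal k - spinVal (ρ i)| := (one_mul _).symm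
  -- tv equals sum against f
  have hsum0 : ∑ τ', (μ τ' - π τ') = 0 := by
    rw [Finset.sum_sub_distrib]
    rw [hμ, hπ]
    rw [bcGlauber_pow_rowsum β K n hn0 t σ, gibbsBC_sum]
    ring
  have htv : tvBC n μ π = ∑ τ', (μ τ' - π τ') * f τ' := by
    unfold tvBC
    have habs : ∀ τ', |μ τ' - π τ'| = 2 * ((μ τ' - π τ') * f τ') - (μ τ' - π τ') := by
      intro τ'
      rw [hfval]
      by_cases h : 0 < μ τ' - π τ'
      · rw [if_pos h, abs_of_pos h]; ring
      · rw [if_neg h, abs_of_nonpos (not_lt.1 h)]; ring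
    rw [Finset.sum_congr rfl (fun τ' _ => habs τ')]
    rw [Finset.sum_sub_distrib, hsum0, sub_zero, ← Finset.mul_sum]
    ring
  -- express as difference via stationarity
  set G : (Fin n → Fin 3) → ℝ := ((bcGlauber β K n) ^ t).mulVec f with hG
  have hμf : ∑ τ', μ τ' * f τ' = G σ := rfl
  have hπf : ∑ τ', π τ' * f τ' = ∑ τ'', π τ'' * G τ'' := by
    calc ∑ τ', π τ' * f τ'
        = ∑ τ', (∑ τ'', π τ'' * ((bcGlauber β K n) ^ t) τ'' τ') * f τ' := by
          refine Finset.sum_congr rfl (fun τ' _ => ?_)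
          rw [hπ, stationary_pow β K n hn0 t τ']
      _ = ∑ τ', ∑ τ'', π τ'' * ((bcGlauber β K n) ^ t) τ'' τ' * f τ' := by
          refine Finset.sum_congr rfl (fun τ' _ => ?_)
          rw [Finset.sum_mul]
      _ = ∑ τ'', ∑ τ', π τ'' * ((bcGlauber β K n) ^ t) τ'' τ' * f τ' := Finset.sum_comm
      _ = ∑ τ'', π τ'' * G τ'' := by
          refine Finset.sum_congr rfl (fun τ'' _ => ?_)
          simp only [hG, Matrix.mulVec, dotProduct]
          rw [Finset.mul_sum]
          exact Finset.sum_congr rfl (fun τ' _ => by ring)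
  have hGLip := contraction_pow β K n hn hβ0 hK0 hc4 f hfLip t
  have hκt0 : 0 ≤ κ ^ t := by
    apply pow_nonneg
    rw [hκ]
    have h1 : (1:ℝ)/n ≤ 1 := by rw [div_le_one hnR]; exact_mod_cast hn
    have h2 : 0 ≤ 4*β*K/((2 + Real.exp (β - β*K/n)) * n) := by positivity
    nlinarith
  have hGdiff : ∀ τ'', |G σ - G τ''| ≤ 2 * κ^t * n :=
    fun τ'' => lip1_global n (κ^t) hκt0 G hGLip σ τ''
  calc tvBC n μ π = ∑ τ', (μ τ' - π τ') * f τ' := htv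
    _ = ∑ τ', μ τ' * f τ' - ∑ τ', π τ' * f τ' := by
        rw [← Finset.sum_sub_distrib]
        exact Finset.sum_congr rfl (fun τ' _ => by ring)
    _ = G σ - ∑ τ'', π τ'' * G τ'' := by rw [hμf, hπf]
    _ = ∑ τ'', π τ'' * (G σ - G τ'') := by
        have h1 : ∑ τ'', π τ'' * (G σ - G τ'')
            = (∑ τ'', π τ'') * G σ - ∑ τ'', π τ'' * G τ'' := by
          rw [Finset.sum_mul, ← Finset.sum_sub_distrib]
          exact Finset.sum_congr rfl (fun τ'' _ => by ring)
        rw [h1, hπ, gibbsBC_sum, one_mul]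
    _ ≤ ∑ τ'', π τ'' * (2 * κ^t * n) := by
        refine Finset.sum_le_sum (fun τ'' _ => ?_)
        exact mul_le_mul_of_nonneg_left ((le_abs_self _).trans (hGdiff τ'')) (gibbsBC_nonneg n β K τ'')
    _ = 2 * κ^t * n := by
        rw [← Finset.sum_mul, hπ, gibbsBC_sum, one_mul]


set_option maxHeartbeats 1000000 in
/-- **Rapid mixing in the continuous phase transition region.**  For
`0 < β ≤ β_c = log 4` and `K < K_c^{(2)}(β)`, for every
`α ∈ (0, (K_c^{(2)}(β) − K)/K_c^{(2)}(β))` and `ε ∈ (0,1)`, for all sufficiently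
large `n`, `t_mix(ε) ≤ (n/α)(log n + log(1/ε))`. -/
theorem blume_capel_rapid_mixing_continuous (β K : ℝ) (hβ0 : 0 < β)
    (hβ : β ≤ Real.log 4) (hK0 : 0 < K) (hK : K < Kc2 β) :
    ∀ α ∈ Set.Ioo (0 : ℝ) ((Kc2 β - K) / Kc2 β), ∀ ε ∈ Set.Ioo (0 : ℝ) 1,
      ∀ᶠ n : ℕ in atTop,
        (tmixBC β K n ε : ℝ) ≤ (n / α) * (Real.log n + Real.log (1 / ε)) := by
  intro α hα ε hε
  obtain ⟨hα0, hαlt⟩ := hα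
  obtain ⟨hε0, hε1⟩ := hε
  have hKc : 0 < Kc2 β := by
    unfold Kc2
    positivity
  set α₀ := (Kc2 β - K) / Kc2 β with hα₀def
  have hα₀pos : 0 < α₀ := div_pos (by linarith) hKc
  have hα₀lt1 : α₀ < 1 := by
    rw [hα₀def, div_lt_one hKc]
    linarith
  set α' := (α + α₀) / 2 with hα'def
  have hαα' : α < α' := by rw [hα'def]; linarith
  have hα'α₀ : α' < α₀ := by rw [hα'def]; linarith
  have hα'pos : 0 < α' := by linarith
  have hα'lt1 : α' < 1 := by linarith
  have h1α' : (0:ℝ) < 1 - α' := by linarith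
  have h1α₀ : (0:ℝ) < 1 - α₀ := by linarith
  -- key : 4βK/(1-α') - 2 < exp β
  have hα₀K : 1 - α₀ = K / Kc2 β := by
    rw [hα₀def]
    field_simp
    ring
  have hKc2val : 4 * β * Kc2 β = Real.exp β + 2 := by
    unfold Kc2
    field_simp
  have hkey : 4 * β * K / (1 - α') - 2 < Real.exp β := by
    have h1 : 4 * β * K / (1 - α') < 4 * β * K / (1 - α₀) := by
      apply div_lt_div_of_pos_left (by positivity) h1α₀
      linarith
    have h2 : 4 * β * K / (1 - α₀) = Real.exp β + 2 := by
      rw [hα₀K, div_div_eq_mul_div, ← hKc2val]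
      field_simp
    linarith
  -- eventually facts
  have hcc_tendsto : Filter.Tendsto (fun n : ℕ => Real.exp (β - β * K / n))
      Filter.atTop (nhds (Real.exp β)) := by
    have h1 : Filter.Tendsto (fun n : ℕ => β - β * K / n) Filter.atTop (nhds β) := by
      have h2 : Filter.Tendsto (fun n : ℕ => β * K * (1 / (n:ℝ))) Filter.atTop (nhds 0) := by
        simpa using tendsto_one_div_atTop_nhds_zero_nat.const_mul (β * K)
      have h3 := (tendsto_const_nhds (x := β) (f := Filter.atTop (α := ℕ))).sub h2
      simpa [mul_one_div, div_eq_mul_inv] using h3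
    exact (Real.continuous_exp.tendsto β).comp h1
  have hev1 : ∀ᶠ n : ℕ in Filter.atTop,
      4 * β * K / (1 - α') - 2 < Real.exp (β - β * K / n) :=
    hcc_tendsto.eventually (eventually_gt_nhds hkey)
  have hev2 : ∀ᶠ n : ℕ in Filter.atTop, 1 ≤ n := Filter.eventually_ge_atTop 1
  -- smallness
  have hfrac1 : 1 < α' / α := (one_lt_div hα0).2 hαα'
  have hev3 : ∀ᶠ n : ℕ in Filter.atTop,
      2 * (n:ℝ) * Real.exp (α' / n) * Real.exp (-(α' / α) * Real.log n) < 1 := by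
    have hlog : Filter.Tendsto (fun n : ℕ => Real.log n) Filter.atTop Filter.atTop :=
      Real.tendsto_log_atTop.comp tendsto_natCast_atTop_atTop
    have hpos : 0 < α' / α - 1 := by linarith
    have h1 : Filter.Tendsto (fun n : ℕ => (α' / α - 1) * Real.log n)
        Filter.atTop Filter.atTop := hlog.const_mul_atTop hpos
    have h2 : Filter.Tendsto (fun n : ℕ => -((α' / α - 1) * Real.log n))
        Filter.atTop Filter.atBot := Filter.tendsto_neg_atTop_atBot.comp h1
    have h3 : Filter.Tendsto (fun n : ℕ => Real.exp ((1 - α' / α) * Real.log n))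
        Filter.atTop (nhds 0) := by
      have h2' : Filter.Tendsto (fun n : ℕ => (1 - α' / α) * Real.log n)
          Filter.atTop Filter.atBot := by
        have heq : (fun n : ℕ => (1 - α' / α) * Real.log n)
            = fun n : ℕ => -((α' / α - 1) * Real.log n) := by funext x; ring_nf
        rw [heq]
        exact Filter.tendsto_neg_atTop_atBot.comp h1
      simpa [Function.comp_def] using Real.tendsto_exp_atBot.comp h2'
    have h4 : Filter.Tendsto (fun n : ℕ => Real.exp (α' / n)) Filter.atTop (nhds 1) := by
      have h5 : Filter.Tendsto (fun n : ℕ => α' * (1 / (n:ℝ))) Filter.atTop (nhds 0) := by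
        simpa using tendsto_one_div_atTop_nhds_zero_nat.const_mul α'
      have h6 := (Real.continuous_exp.tendsto 0).comp h5
      simpa [mul_one_div, Real.exp_zero, Function.comp_def, div_eq_mul_inv] using h6
    have h7 : Filter.Tendsto
        (fun n : ℕ => 2 * Real.exp (α' / n) * Real.exp ((1 - α' / α) * Real.log n))
        Filter.atTop (nhds 0) := by
      have := ((tendsto_const_nhds (x := (2:ℝ)) (f := Filter.atTop (α := ℕ))).mul h4).mul h3
      simpa using this
    have h8 := h7.eventually (eventually_lt_nhds (by norm_num : (0:ℝ) < 1))
    filter_upwards [h8, Filter.eventually_ge_atTop 1] with n h8n hn1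
    have hnR : (0:ℝ) < n := by exact_mod_cast hn1
    have heq : 2 * (n:ℝ) * Real.exp (α' / n) * Real.exp (-(α' / α) * Real.log n)
        = 2 * Real.exp (α' / n) * Real.exp ((1 - α' / α) * Real.log n) := by
      rw [show (1 - α' / α) * Real.log n = Real.log n + (-(α' / α) * Real.log n) by ring,
        Real.exp_add, Real.exp_log hnR]
      ring
    rw [heq]
    exact h8n
  -- combine
  filter_upwards [hev1, hev2, hev3] with n hcc hn1 hsmall
  have hnR : (0:ℝ) < n := by exact_mod_cast hn1
  have hn0 : (n:ℝ) ≠ 0 := hnR.ne'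
  have hn1R : (1:ℝ) ≤ n := by exact_mod_cast hn1
  set cc := Real.exp (β - β * K / (n:ℝ)) with hccdef
  have hccpos : 0 < cc := Real.exp_pos _
  have hc4 : cc ≤ 4 := by
    rw [hccdef]
    calc Real.exp (β - β * K / n) ≤ Real.exp (Real.log 4) := by
          apply Real.exp_le_exp.2
          have : 0 ≤ β * K / n := by positivity
          linarith
      _ = 4 := Real.exp_log (by norm_num)
  -- contraction constant
  have hE2 : (1 - 1/(n:ℝ)) * (1 + 4 * β * K / ((2 + cc) * n)) ≤ 1 - α'/n := by
    have hb0' : 4 * β * K / (1 - α') < 2 + cc := by linarith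
    have hb0 : 4 * β * K < (1 - α') * (2 + cc) := by
      rw [mul_comm (1 - α') (2 + cc)]
      exact (div_lt_iff₀ h1α').1 hb0'
    have hb1 : 4 * β * K / ((2 + cc) * n) ≤ (1 - α') / n := by
      rw [div_le_div_iff₀ (by positivity) hnR]
      nlinarith [hnR]
    have hb2 : (1 - 1/(n:ℝ)) * (1 + 4 * β * K / ((2 + cc) * n))
        ≤ (1 - 1/(n:ℝ)) * (1 + (1 - α') / n) := by
      apply mul_le_mul_of_nonneg_left (by linarith) ?_
      have : 1/(n:ℝ) ≤ 1 := by rw [div_le_one hnR]; exact hn1R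
      linarith
    have hb3 : (1 - 1/(n:ℝ)) * (1 + (1 - α') / n) = 1 - α'/n - (1 - α')/n^2 := by
      field_simp
      ring
    have hb4 : 0 ≤ (1 - α')/(n:ℝ)^2 := by positivity
    linarith
  have hκ0 : 0 ≤ (1 - 1/(n:ℝ)) * (1 + 4 * β * K / ((2 + cc) * n)) := by
    have h1 : 1/(n:ℝ) ≤ 1 := by rw [div_le_one hnR]; exact hn1R
    have h2 : 0 ≤ 4 * β * K / ((2 + cc) * n) := by positivity
    nlinarith
  have h1αn : 0 ≤ 1 - α'/(n:ℝ) := by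
    have : α'/(n:ℝ) ≤ 1 := by
      rw [div_le_one hnR]
      linarith
    linarith
  set R := ((n:ℝ) / α) * (Real.log n + Real.log (1 / ε)) with hRdef
  have hlogn : 0 ≤ Real.log n := Real.log_nonneg hn1R
  have hlogeps : 0 ≤ Real.log (1/ε) := Real.log_nonneg (by rw [le_div_iff₀ hε0, one_mul]; exact hε1.le)
  have hR0 : 0 ≤ R := by
    rw [hRdef]
    positivity
  set t := ⌊R⌋₊ with htdef
  have htR : (t:ℝ) ≤ R := Nat.floor_le hR0
  have htR1 : R - 1 ≤ (t:ℝ) := by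
    have := Nat.lt_floor_add_one R
    rw [← htdef] at this
    linarith
  -- epsilon part
  have hεpart : Real.exp (-(α' / α) * Real.log (1/ε)) ≤ ε := by
    have hlε : Real.log (1/ε) = -Real.log ε := by rw [one_div, Real.log_inv]
    have hlogε : Real.log ε < 0 := Real.log_neg hε0 hε1
    have h1 : -(α' / α) * Real.log (1/ε) = (α' / α) * Real.log ε := by rw [hlε]; ring
    rw [h1]
    calc Real.exp ((α' / α) * Real.log ε) ≤ Real.exp (Real.log ε) := by
          apply Real.exp_le_exp.2
          nlinarith
      _ = ε := Real.exp_log hε0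
  -- membership
  have hmem : t ∈ {t : ℕ | ∀ σ : Fin n → Fin 3,
      tvBC n (fun τ => ((bcGlauber β K n) ^ t) σ τ) (gibbsBC n β K) ≤ ε} := by
    intro σ
    have h1 := tv_bound β K n hn1 hβ0 hK0 (by rw [← hccdef]; exact hc4) t σ
    have h2 : ((1 - 1/(n:ℝ)) * (1 + 4*β*K/((2 + Real.exp (β - β*K/n)) * n)))^t
        ≤ (1 - α'/(n:ℝ))^t := by
      apply pow_le_pow_left₀
      · rw [← hccdef]; exact hκ0
      · rw [← hccdef]; exact hE2
    have h3 : (1 - α'/(n:ℝ))^t ≤ Real.exp (-(α'/(n:ℝ)))^t := by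
      apply pow_le_pow_left₀ h1αn
      linarith [Real.add_one_le_exp (-(α'/(n:ℝ)))]
    have h4 : Real.exp (-(α'/(n:ℝ)))^t = Real.exp ((t:ℝ) * (-(α'/(n:ℝ)))) := by
      rw [Real.exp_nat_mul]
    have hd : 0 ≤ α'/(n:ℝ) := by positivity
    have h5 : (t:ℝ) * (-(α'/(n:ℝ))) ≤ α'/n - α'/n * R := by
      linarith [mul_le_mul_of_nonneg_left htR1 hd]
    have h6 : α'/(n:ℝ) * R = (α'/α) * (Real.log n + Real.log (1/ε)) := by
      rw [hRdef]
      field_simp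
    have h7 : Real.exp ((t:ℝ) * (-(α'/(n:ℝ))))
        ≤ Real.exp (α'/n) * Real.exp (-(α'/α) * Real.log n)
          * Real.exp (-(α'/α) * Real.log (1/ε)) := by
      rw [← Real.exp_add, ← Real.exp_add]
      apply Real.exp_le_exp.2
      rw [show α'/(n:ℝ) + -(α'/α) * Real.log n + -(α'/α) * Real.log (1/ε)
          = α'/n - (α'/α) * (Real.log n + Real.log (1/ε)) by ring, ← h6]
      exact h5
    calc tvBC n (fun τ => ((bcGlauber β K n) ^ t) σ τ) (gibbsBC n β K)
        ≤ 2 * ((1 - 1/(n:ℝ)) * (1 + 4*β*K/((2 + Real.exp (β - β*K/n)) * n)))^t * n := h1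
      _ ≤ 2 * Real.exp ((t:ℝ) * (-(α'/(n:ℝ)))) * n := by
          rw [← h4]
          have := h2.trans h3
          nlinarith [this, hnR]
      _ ≤ 2 * (Real.exp (α'/n) * Real.exp (-(α'/α) * Real.log n)
            * Real.exp (-(α'/α) * Real.log (1/ε))) * n := by
          nlinarith [h7, hnR, Real.exp_pos ((t:ℝ) * (-(α'/(n:ℝ))))]
      _ = (2 * (n:ℝ) * Real.exp (α' / n) * Real.exp (-(α' / α) * Real.log n))
            * Real.exp (-(α'/α) * Real.log (1/ε)) := by ring
      _ ≤ 1 * ε := by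
          apply mul_le_mul hsmall.le hεpart (Real.exp_pos _).le zero_le_one
      _ = ε := one_mul ε
  have hle : tmixBC β K n ε ≤ t := Nat.sInf_le hmem
  calc (tmixBC β K n ε : ℝ) ≤ (t:ℝ) := by exact_mod_cast hle
    _ ≤ R := htR

end
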